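/- Let h(S) = (Σ_{i∈S} a_i)/(b0 + Σ_{i∈S} b_i) with b0 > 0, a_i ≥ 0, b_i > 0, and suppose min_{i∈N} a_i/b_i ≥ h(N). Then h is submodular over all subsets of N. -/
import Mathlib

lemma stmt_19_aux (A sB ai bi aj bj b0 x : ℝ) (hB : 0 < b0 + sB) (hbi : 0 < bi)
    (hbj : 0 < bj) (h1 : x * bi ≤ ai) (h2 : x * bj ≤ aj) (h3 : A ≤ x * (b0 + sB)) :
    (ai + (aj + A)) / (b0 + (bi + (bj + sB))) - (aj + A) / (b0 + (bj + sB)) ≤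
      (ai + A) / (b0 + (bi + sB)) - A / (b0 + sB) := by
  set B := b0 + sB with hBdef
  have e1 : b0 + (bi + (bj + sB)) = B + bi + bj := by rw [hBdef]; ring
  have e2 : b0 + (bj + sB) = B + bj := by rw [hBdef]; ring
  have e3 : b0 + (bi + sB) = B + bi := by rw [hBdef]; ring
  rw [e1, e2, e3]
  have p1 : 0 < B + bi := by linarith
  have p2 : 0 < B + bj := by linarith
  have p3 : 0 < B + bi + bj := by linarith
  rw [div_sub_div _ _ (ne_of_gt p3) (ne_of_gt p2), div_sub_div _ _ (ne_of_gt p1) (ne_of_gt hB),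
    div_le_div_iff₀ (by positivity) (by positivity)]
  nlinarith [mul_nonneg (mul_nonneg (mul_nonneg hbj.le hB.le) p2.le) (by linarith : (0:ℝ) ≤ ai - x * bi),
    mul_nonneg (mul_nonneg (mul_nonneg hbi.le hbj.le) (by linarith : (0:ℝ) ≤ 2*B + bj + bi)) (by linarith : (0:ℝ) ≤ x * B - A),
    mul_nonneg (mul_nonneg (mul_nonneg hbi.le hB.le) p1.le) (by linarith : (0:ℝ) ≤ aj - x * bj)]

theorem stmt_19 {ι : Type*} [DecidableEq ι] (N : Finset ι) (hN : N.Nonempty)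
    (a b : ι → ℝ) (b0 : ℝ)
    (hb0 : 0 < b0) (ha : ∀ i ∈ N, 0 ≤ a i) (hb : ∀ i ∈ N, 0 < b i)
    (h : Finset ι → ℝ)
    (hdef : ∀ S : Finset ι, h S = (∑ i ∈ S, a i) / (b0 + ∑ i ∈ S, b i))
    (hmin : h N ≤ N.inf' hN (fun i => a i / b i)) :
    ∀ S : Finset ι, S ⊆ N → ∀ i ∈ N, ∀ j ∈ N, i ∉ S → j ∉ S → i ≠ j →
      h (insert i (insert j S)) - h (insert j S) ≤ h (insert i S) - h S := by
  intro S hS i hi j hj hiS hjS hij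
  set x := h N with hx
  have hratio : ∀ k ∈ N, x * b k ≤ a k := by
    intro k hk
    have h1 : x ≤ a k / b k := le_trans hmin (Finset.inf'_le _ hk)
    exact (le_div_iff₀ (hb k hk)).mp h1
  have hsumb : ∀ T : Finset ι, T ⊆ N → 0 ≤ ∑ k ∈ T, b k :=
    fun T hT => Finset.sum_nonneg fun k hk => (hb k (hT hk)).le
  have hBpos : 0 < b0 + ∑ k ∈ S, b k := by linarith [hsumb S hS]
  have hBN : 0 < b0 + ∑ k ∈ N, b k := by linarith [hsumb N le_rfl]
  -- A ≤ x * B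
  have hNsum : x * (b0 + ∑ k ∈ N, b k) = ∑ k ∈ N, a k := by
    rw [hx, hdef N, div_mul_cancel₀ _ (ne_of_gt hBN)]
  have hcomp : x * ∑ k ∈ N \ S, b k ≤ ∑ k ∈ N \ S, a k := by
    rw [Finset.mul_sum]
    exact Finset.sum_le_sum fun k hk => hratio k (Finset.mem_sdiff.mp hk).1
  have hsa : ∑ k ∈ N \ S, a k + ∑ k ∈ S, a k = ∑ k ∈ N, a k := Finset.sum_sdiff hS
  have hsb : ∑ k ∈ N \ S, b k + ∑ k ∈ S, b k = ∑ k ∈ N, b k := Finset.sum_sdiff hS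
  have hdist : x * ∑ k ∈ N \ S, b k + x * ∑ k ∈ S, b k = x * ∑ k ∈ N, b k := by
    rw [← mul_add, hsb]
  have hNsum' : x * b0 + x * ∑ k ∈ N, b k = ∑ k ∈ N, a k := by rw [← mul_add]; exact hNsum
  have hA : (∑ k ∈ S, a k) ≤ x * (b0 + ∑ k ∈ S, b k) := by rw [mul_add]; linarith
  have hiS' : i ∉ insert j S := by simp [hij, hiS]
  simp only [hdef, Finset.sum_insert hiS', Finset.sum_insert hjS, Finset.sum_insert hiS]
  exact stmt_19_aux (∑ k ∈ S, a k) (∑ k ∈ S, b k) (a i) (b i) (a j) (b j) b0 x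
    hBpos (hb i hi) (hb j hj) (hratio i hi) (hratio j hj) hA
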